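/- Let a ∈ ℝ^{md}. There exists a constant C' > 0, depending only on a and T_1,…,T_m, such that for every nonempty compact set E ⊆ Σ and every r with 0 < r < α_+, N_r(π^a(E)) ≤ ( log r / log α_+ + 2 ) · C' · C_r(E), where α_+ = max_{1≤i≤m} ‖T_i‖. -/

import Mathlib

open MeasureTheory Filter Topology Metric
open scoped ENNReal NNReal

noncomputable section

namespace SelfAffineProj

/-- The word product `T_{x|n} = T_{x_1} ⋯ T_{x_n}`. -/
def wordProd {m d : ℕ} (T : Fin m → Matrix (Fin d) (Fin d) ℝ) (x : ℕ → Fin m) (n : ℕ) :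
    Matrix (Fin d) (Fin d) ℝ :=
  ((List.range n).map fun k => T (x k)).prod

/-- The cylinder `[x|n]` of sequences agreeing with `x` on the first `n` coordinates. -/
def cylinder {m : ℕ} (x : ℕ → Fin m) (n : ℕ) : Set (ℕ → Fin m) :=
  { y | ∀ k < n, y k = x k }

/-- `sval M k` is the `(k+1)`-th largest singular value `α_{k+1}(M)` of `M`. -/
def sval {d : ℕ} (M : Matrix (Fin d) (Fin d) ℝ) (k : Fin d) : ℝ :=
  Real.sqrt
    ((by simpa using Matrix.isHermitian_conjTranspose_mul_self M : (M.transpose * M).IsHermitian).eigenvalues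
      (Tuple.sort (by simpa using Matrix.isHermitian_conjTranspose_mul_self M : (M.transpose * M).IsHermitian).eigenvalues k.rev))

/-- `svalN M i` is `α_{i+1}(M)` for `i < d`, junk value `0` otherwise. -/
def svalN {d : ℕ} (M : Matrix (Fin d) (Fin d) ℝ) (i : ℕ) : ℝ :=
  if h : i < d then sval M ⟨i, h⟩ else 0

/-- The singular value function `φ^s`. -/
def phi {d : ℕ} (s : ℝ) (M : Matrix (Fin d) (Fin d) ℝ) : ℝ :=
  if s < (d : ℝ) then
    (∏ i ∈ Finset.range ⌊s⌋₊, svalN M i) * svalN M ⌊s⌋₊ ^ (s - (⌊s⌋₊ : ℝ))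
  else |M.det| ^ (s / (d : ℝ))

/-- The singular value function extended to `s ∈ [0,∞]`, with `φ^∞ = 0`. -/
def phiE {d : ℕ} (s : ℝ≥0∞) (M : Matrix (Fin d) (Fin d) ℝ) : ℝ≥0∞ :=
  if s = ⊤ then 0 else ENNReal.ofReal (phi s.toReal M)

/-- The continuous linear map on Euclidean space induced by a matrix. -/
def mCLM {d : ℕ} (M : Matrix (Fin d) (Fin d) ℝ) :
    EuclideanSpace ℝ (Fin d) →L[ℝ] EuclideanSpace ℝ (Fin d) :=
  Matrix.toEuclideanCLM (𝕜 := ℝ) M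

/-- `seqComp F n = F 0 ∘ F 1 ∘ ⋯ ∘ F (n-1)`. -/
def seqComp {E : Type*} (F : ℕ → E → E) : ℕ → E → E
  | 0 => id
  | n + 1 => F 0 ∘ seqComp (fun k => F (k + 1)) n

/-- The coding map `π^a(x) = lim_n f^a_{x_1} ∘ ⋯ ∘ f^a_{x_n}(0)`. -/
def codingMap {m d : ℕ} (T : Fin m → Matrix (Fin d) (Fin d) ℝ)
    (a : Fin m → EuclideanSpace ℝ (Fin d)) (x : ℕ → Fin m) : EuclideanSpace ℝ (Fin d) :=
  limUnder atTop fun n => seqComp (fun k y => mCLM (T (x k)) y + a (x k)) n 0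

/-- `Z_M(r) = ∏_{k=1}^d min{r, α_k(M)}/α_k(M)`. -/
def Zmat {d : ℕ} (M : Matrix (Fin d) (Fin d) ℝ) (r : ℝ) : ℝ :=
  ∏ k : Fin d, min r (sval M k) / sval M k

/-- `Z_{x|n}(r)`. -/
def Zword {m d : ℕ} (T : Fin m → Matrix (Fin d) (Fin d) ℝ) (x : ℕ → Fin m) (n : ℕ)
    (r : ℝ) : ℝ :=
  Zmat (wordProd T x n) r

/-- The length `|x ∧ y|` of the longest common initial segment of `x` and `y`. -/
def firstDiff {m : ℕ} (x y : ℕ → Fin m) : ℕ :=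
  sInf { n | x n ≠ y n }

/-- `Z_{x ∧ y}(r)`, with the convention `Z_{x ∧ y}(r) = 1` for `x = y`. -/
def Zwedge {m d : ℕ} (T : Fin m → Matrix (Fin d) (Fin d) ℝ) (x y : ℕ → Fin m) (r : ℝ) : ℝ :=
  letI := Classical.dec (x = y)
  if x = y then 1 else Zword T x (firstDiff x y) r

/-- `G_μ(x,r) = ∫ Z_{x∧y}(r) dμ(y)`. -/
def Gfun {m d : ℕ} (T : Fin m → Matrix (Fin d) (Fin d) ℝ) (μ : Measure (ℕ → Fin m))
    (x : ℕ → Fin m) (r : ℝ) : ℝ :=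
  ∫ y, Zwedge T x y r ∂μ

/-- `D(μ,x) = limsup_{r→0} log G_μ(x,r)/log r`. -/
def Dfun {m d : ℕ} (T : Fin m → Matrix (Fin d) (Fin d) ℝ) (μ : Measure (ℕ → Fin m))
    (x : ℕ → Fin m) : ℝ≥0∞ :=
  limsup (fun r : ℝ => ENNReal.ofReal (Real.log (Gfun T μ x r) / Real.log r)) (𝓝[>] 0)

/-- Lower local dimension of a measure on `ℝ^d` at a point. -/
def lowerLocalDim {d : ℕ} (η : Measure (EuclideanSpace ℝ (Fin d)))
    (z : EuclideanSpace ℝ (Fin d)) : ℝ≥0∞ :=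
  liminf (fun r : ℝ => ENNReal.ofReal (Real.log (η (closedBall z r)).toReal / Real.log r))
    (𝓝[>] 0)

/-- Upper local dimension of a measure on `ℝ^d` at a point. -/
def upperLocalDim {d : ℕ} (η : Measure (EuclideanSpace ℝ (Fin d)))
    (z : EuclideanSpace ℝ (Fin d)) : ℝ≥0∞ :=
  limsup (fun r : ℝ => ENNReal.ofReal (Real.log (η (closedBall z r)).toReal / Real.log r))
    (𝓝[>] 0)

/-- Lower Hausdorff dimension of a measure. -/
def lowerHausdorffDim {d : ℕ} (η : Measure (EuclideanSpace ℝ (Fin d))) : ℝ≥0∞ :=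
  essInf (lowerLocalDim η) η

/-- Upper Hausdorff dimension of a measure. -/
def upperHausdorffDim {d : ℕ} (η : Measure (EuclideanSpace ℝ (Fin d))) : ℝ≥0∞ :=
  essSup (lowerLocalDim η) η

/-- Lower packing dimension of a measure. -/
def lowerPackingDim {d : ℕ} (η : Measure (EuclideanSpace ℝ (Fin d))) : ℝ≥0∞ :=
  essInf (upperLocalDim η) η

/-- Upper packing dimension of a measure. -/
def upperPackingDim {d : ℕ} (η : Measure (EuclideanSpace ℝ (Fin d))) : ℝ≥0∞ :=
  essSup (upperLocalDim η) η

/-- A measure is exact dimensional if its local dimension exists a.e. and is a.e. constant. -/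
def exactDimensional {d : ℕ} (η : Measure (EuclideanSpace ℝ (Fin d))) : Prop :=
  ∃ C : ℝ≥0∞, ∀ᵐ z ∂η, lowerLocalDim η z = C ∧ upperLocalDim η z = C

/-- Cylinder of a finite word given as a list. -/
def cylL {m : ℕ} (I : List (Fin m)) : Set (ℕ → Fin m) :=
  { y | ∀ (k : ℕ) (hk : k < I.length), y k = I.get ⟨k, hk⟩ }

/-- Word product for a word given as a list. -/
def wordProdL {m d : ℕ} (T : Fin m → Matrix (Fin d) (Fin d) ℝ) (I : List (Fin m)) :
    Matrix (Fin d) (Fin d) ℝ :=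
  (I.map T).prod

/-- `M^s_n(E)`: the Falconer net pre-measure at level `n`. -/
def netMeasureAux {m d : ℕ} (T : Fin m → Matrix (Fin d) (Fin d) ℝ) (s : ℝ)
    (E : Set (ℕ → Fin m)) (n : ℕ) : ℝ≥0∞ :=
  ⨅ (C : Set (List (Fin m))) (_ : ∀ I ∈ C, n ≤ I.length) (_ : E ⊆ ⋃ I ∈ C, cylL I),
    ∑' I : C, ENNReal.ofReal (phi s (wordProdL T (I : List (Fin m))))

/-- `M^s(E) = lim_n M^s_n(E)`. -/
def netMeasure {m d : ℕ} (T : Fin m → Matrix (Fin d) (Fin d) ℝ) (s : ℝ)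
    (E : Set (ℕ → Fin m)) : ℝ≥0∞ :=
  ⨆ n, netMeasureAux T s E n

/-- `dim_M E`. -/
def dimM {m d : ℕ} (T : Fin m → Matrix (Fin d) (Fin d) ℝ) (E : Set (ℕ → Fin m)) : ℝ :=
  sInf { s : ℝ | 0 ≤ s ∧ netMeasure T s E < ⊤ }

/-- The energy `∬ Z_{x∧y}(r) dμ(x) dμ(y)`. -/
def energy {m d : ℕ} (T : Fin m → Matrix (Fin d) (Fin d) ℝ) (μ : Measure (ℕ → Fin m))
    (r : ℝ) : ℝ :=
  ∫ x, ∫ y, Zwedge T x y r ∂μ ∂μ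

/-- The `r`-capacity `C_r(E)` of a set `E ⊆ Σ`. -/
def capFn {m d : ℕ} (T : Fin m → Matrix (Fin d) (Fin d) ℝ) (E : Set (ℕ → Fin m)) (r : ℝ) : ℝ :=
  (sInf { v : ℝ | ∃ μ : Measure (ℕ → Fin m),
      IsProbabilityMeasure μ ∧ μ Eᶜ = 0 ∧ v = energy T μ r })⁻¹

/-- Lower capacity dimension. -/
def lowerCapDim {m d : ℕ} (T : Fin m → Matrix (Fin d) (Fin d) ℝ)
    (E : Set (ℕ → Fin m)) : ℝ≥0∞ :=
  liminf (fun r : ℝ => ENNReal.ofReal (Real.log (capFn T E r) / (-Real.log r))) (𝓝[>] 0)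

/-- Upper capacity dimension. -/
def upperCapDim {m d : ℕ} (T : Fin m → Matrix (Fin d) (Fin d) ℝ)
    (E : Set (ℕ → Fin m)) : ℝ≥0∞ :=
  limsup (fun r : ℝ => ENNReal.ofReal (Real.log (capFn T E r) / (-Real.log r))) (𝓝[>] 0)

/-- `N_r(F)`: the minimal number of sets of diameter at most `r` needed to cover `F`. -/
def coverNum {d : ℕ} (F : Set (EuclideanSpace ℝ (Fin d))) (r : ℝ) : ℝ≥0∞ :=
  ⨅ (C : Finset (Set (EuclideanSpace ℝ (Fin d)))) (_ : F ⊆ ⋃ s ∈ C, s)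
    (_ : ∀ s ∈ C, Metric.diam s ≤ r), (C.card : ℝ≥0∞)

/-- Lower box-counting dimension. -/
def lowerBoxDim {d : ℕ} (F : Set (EuclideanSpace ℝ (Fin d))) : ℝ≥0∞ :=
  liminf (fun r : ℝ => ENNReal.ofReal (Real.log (coverNum F r).toReal / (-Real.log r))) (𝓝[>] 0)

/-- Upper box-counting dimension. -/
def upperBoxDim {d : ℕ} (F : Set (EuclideanSpace ℝ (Fin d))) : ℝ≥0∞ :=
  limsup (fun r : ℝ => ENNReal.ofReal (Real.log (coverNum F r).toReal / (-Real.log r))) (𝓝[>] 0)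

section Auxiliary
open Matrix

variable {d : ℕ}

lemma mCLM_mul_apply (A B : Matrix (Fin d) (Fin d) ℝ) (v : EuclideanSpace ℝ (Fin d)) :
    mCLM (A * B) v = mCLM A (mCLM B v) := by
  rw [mCLM, _root_.map_mul]; rfl

lemma norm_mCLM_mul_le (A B : Matrix (Fin d) (Fin d) ℝ) :
    ‖mCLM (A * B)‖ ≤ ‖mCLM A‖ * ‖mCLM B‖ := by
  rw [mCLM, _root_.map_mul]; exact norm_mul_le _ _

lemma mCLM_one : mCLM (1 : Matrix (Fin d) (Fin d) ℝ) = 1 := by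
  rw [mCLM, _root_.map_one]

lemma star_mCLM (M : Matrix (Fin d) (Fin d) ℝ) :
    star (mCLM M) = mCLM (Mᵀ) := by
  rw [mCLM, mCLM, ← map_star]; congr 1

lemma spectral_package (hd : 1 ≤ d) (M : Matrix (Fin d) (Fin d) ℝ) (hM : IsUnit M) :
    ∃ (b : OrthonormalBasis (Fin d) ℝ (EuclideanSpace ℝ (Fin d))) (g : Fin d → ℝ)
      (e : Equiv.Perm (Fin d)),
      (∀ k, 0 < g k) ∧ (∀ k, sval M k = g (e k)) ∧
      (∀ k, g k ≤ ‖mCLM M‖) ∧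
      (∀ (v : EuclideanSpace ℝ (Fin d)) (k : Fin d), |(inner ℝ (mCLM M v) (b k) : ℝ)| ≤ g k * ‖v‖) := by
  have hH : (M.transpose * M).IsHermitian := by simpa using Matrix.isHermitian_conjTranspose_mul_self M
  set β := hH.eigenvalues with hβ
  set u := hH.eigenvectorBasis with hu
  have hMTM : ∀ k, mCLM (Mᵀ * M) (u k) = β k • u k := by
    intro k
    have h := hH.mulVec_eigenvectorBasis k
    apply (WithLp.equiv 2 _).injective
    simpa [mCLM] using h
  have hinner : ∀ j k, (inner ℝ (mCLM M (u j)) (mCLM M (u k)) : ℝ)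
      = if j = k then β k else 0 := by
    intro j k
    have : (inner ℝ (mCLM M (u j)) (mCLM M (u k)) : ℝ)
        = inner ℝ (u j) (mCLM (Mᵀ) (mCLM M (u k))) := by
      rw [← star_mCLM]
      rw [(by rfl : star (mCLM M) = ContinuousLinearMap.adjoint (mCLM M))]
      rw [ContinuousLinearMap.adjoint_inner_right]
    rw [this, ← mCLM_mul_apply, hMTM, real_inner_smul_right]
    rcases eq_or_ne j k with rfl | hjk
    · rw [if_pos rfl, real_inner_self_eq_norm_sq, u.orthonormal.1 j]; norm_num
    · rw [if_neg hjk, u.orthonormal.2 hjk, mul_zero]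
  have hβnn : ∀ k, 0 ≤ β k := fun k =>
    (Matrix.posSemidef_conjTranspose_mul_self M).eigenvalues_nonneg k
  have hdet : (Mᵀ * M).det = ∏ k, β k := by
    simpa using hH.det_eq_prod_eigenvalues
  have hdetM : IsUnit (Mᵀ * M).det := by
    rw [Matrix.det_mul, Matrix.det_transpose]
    exact ((Matrix.isUnit_iff_isUnit_det M).mp hM).mul ((Matrix.isUnit_iff_isUnit_det M).mp hM)
  have hβpos : ∀ k, 0 < β k := by
    intro k
    rcases (hβnn k).lt_or_eq with h | h
    · exact h
    · exfalso
      apply hdetM.ne_zero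
      rw [hdet]
      exact Finset.prod_eq_zero (Finset.mem_univ k) h.symm
  set g : Fin d → ℝ := fun k => Real.sqrt (β k) with hg
  have hgpos : ∀ k, 0 < g k := fun k => Real.sqrt_pos.mpr (hβpos k)
  have hgsq : ∀ k, g k * g k = β k := fun k => Real.mul_self_sqrt (hβnn k)
  set e : Equiv.Perm (Fin d) := Fin.revPerm.trans (Tuple.sort β) with he
  have hsv : ∀ k, sval M k = g (e k) := by
    intro k
    simp [sval, hg, he]
    rfl
  have hinner2 : ∀ (v : EuclideanSpace ℝ (Fin d)) k,
      (inner ℝ (mCLM M v) (mCLM M (u k)) : ℝ) = β k * inner ℝ v (u k) := by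
    intro v k
    have : (inner ℝ (mCLM M v) (mCLM M (u k)) : ℝ)
        = inner ℝ v (mCLM (Mᵀ) (mCLM M (u k))) := by
      rw [← star_mCLM]
      rw [(by rfl : star (mCLM M) = ContinuousLinearMap.adjoint (mCLM M))]
      rw [ContinuousLinearMap.adjoint_inner_right]
    rw [this, ← mCLM_mul_apply, hMTM, real_inner_smul_right]
  have hgle : ∀ k, g k ≤ ‖mCLM M‖ := by
    intro k
    have h1 : ‖mCLM M (u k)‖ ^ 2 = β k := by
      rw [← real_inner_self_eq_norm_sq, hinner k k, if_pos rfl]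
    have h2 : ‖mCLM M (u k)‖ ≤ ‖mCLM M‖ := by
      have := (mCLM M).le_opNorm (u k)
      rwa [u.orthonormal.1 k, mul_one] at this
    calc g k = Real.sqrt (β k) := rfl
      _ ≤ Real.sqrt (‖mCLM M‖ ^ 2) := Real.sqrt_le_sqrt
          (by nlinarith [norm_nonneg (mCLM M (u k)), norm_nonneg (mCLM M)])
      _ = ‖mCLM M‖ := Real.sqrt_sq (norm_nonneg _)
  -- the orthonormal family
  set w : Fin d → EuclideanSpace ℝ (Fin d) := fun k => (g k)⁻¹ • mCLM M (u k) with hw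
  have hon : Orthonormal ℝ w := by
    rw [orthonormal_iff_ite]
    intro j k
    simp only [hw, real_inner_smul_left, real_inner_smul_right]
    rw [hinner j k]
    rcases eq_or_ne j k with rfl | hjk
    · rw [if_pos rfl, if_pos rfl, ← hgsq j]
      have := (hgpos j).ne'
      field_simp
    · simp [hjk]
  haveI : Nonempty (Fin d) := ⟨⟨0, hd⟩⟩
  have hspan : ⊤ ≤ Submodule.span ℝ (Set.range w) :=
    ge_of_eq (hon.linearIndependent.span_eq_top_of_card_eq_finrank
      (by simp [finrank_euclideanSpace_fin]))
  refine ⟨OrthonormalBasis.mk hon hspan, g, e, hgpos, hsv, hgle, ?_⟩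
  intro v k
  rw [OrthonormalBasis.coe_mk]
  have : (inner ℝ (mCLM M v) (w k) : ℝ) = g k * inner ℝ v (u k) := by
    rw [hw, real_inner_smul_right, hinner2]
    rw [← hgsq k]
    have := (hgpos k).ne'
    field_simp
  rw [this, abs_mul, abs_of_pos (hgpos k)]
  have := abs_real_inner_le_norm v (u k)
  rw [u.orthonormal.1 k, mul_one] at this
  exact mul_le_mul_of_nonneg_left this (hgpos k).le


lemma sval_pos (hd : 1 ≤ d) (M : Matrix (Fin d) (Fin d) ℝ) (hM : IsUnit M) (k : Fin d) :
    0 < sval M k := by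
  obtain ⟨b, g, e, hg, hsv, _, _⟩ := spectral_package hd M hM
  rw [hsv k]; exact hg _

lemma sval_le_norm (hd : 1 ≤ d) (M : Matrix (Fin d) (Fin d) ℝ) (hM : IsUnit M) (k : Fin d) :
    sval M k ≤ ‖mCLM M‖ := by
  obtain ⟨b, g, e, hg, hsv, hle, _⟩ := spectral_package hd M hM
  rw [hsv k]; exact hle _

lemma floor_eq_abs_sub_lt (x y : ℝ) (h : ⌊x⌋ = ⌊y⌋) : |x - y| < 1 := by
  have h1 := Int.floor_le x
  have h2 := Int.lt_floor_add_one x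
  have h3 := Int.floor_le y
  have h4 := Int.lt_floor_add_one y
  rw [h] at h1 h2
  rw [abs_sub_lt_iff]
  constructor <;> linarith

/-- The key geometric counting lemma: the number of `δ`-separated points in a translate of
`M`-image of a ball of radius `R` is at most `∏ (4√d·R·sval M k/δ + 1)`. -/
lemma boxCount (hd : 1 ≤ d) (M : Matrix (Fin d) (Fin d) ℝ) (hM : IsUnit M)
    (R δ : ℝ) (hR : 0 ≤ R) (hδ : 0 < δ) (c : EuclideanSpace ℝ (Fin d))
    (s : Finset (EuclideanSpace ℝ (Fin d)))
    (hin : ∀ p ∈ s, ∃ v : EuclideanSpace ℝ (Fin d), ‖v‖ ≤ R ∧ p = c + mCLM M v)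
    (hsep : ∀ p ∈ s, ∀ q ∈ s, p ≠ q → δ ≤ dist p q) :
    (s.card : ℝ) ≤ ∏ k : Fin d, (4 * Real.sqrt d * R * sval M k / δ + 1) := by
  obtain ⟨b, g, e, hg, hsv, _, hbox⟩ := spectral_package hd M hM
  have hrd : (0:ℝ) < Real.sqrt d := Real.sqrt_pos.mpr (by exact_mod_cast hd)
  set h : ℝ := δ / (2 * Real.sqrt d) with hh
  have hhpos : 0 < h := div_pos hδ (by positivity)
  -- coordinates of points of s
  have hcoord : ∀ p ∈ s, ∀ k, |b.repr (p - c) k| ≤ R * g k := by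
    intro p hp k
    obtain ⟨v, hv, rfl⟩ := hin p hp
    have : b.repr (c + mCLM M v - c) k = inner ℝ (mCLM M v) (b k) := by
      rw [add_sub_cancel_left, b.repr_apply_apply, real_inner_comm]
    rw [this]
    calc |(inner ℝ (mCLM M v) (b k) : ℝ)| ≤ g k * ‖v‖ := hbox v k
      _ ≤ g k * R := mul_le_mul_of_nonneg_left hv (hg k).le
      _ = R * g k := mul_comm _ _
  -- the grid map
  set ι : EuclideanSpace ℝ (Fin d) → (Fin d → ℤ) :=
    fun p k => ⌊(b.repr (p - c) k + R * g k) / h⌋ with hι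
  have hmem : ∀ p ∈ s, ∀ k, ι p k ∈ Finset.Icc (0:ℤ) ⌊2 * R * g k / h⌋ := by
    intro p hp k
    have h1 := hcoord p hp k
    rw [abs_le] at h1
    rw [Finset.mem_Icc]
    constructor
    · exact Int.floor_nonneg.mpr (div_nonneg (by linarith [h1.1]) hhpos.le)
    · exact Int.floor_le_floor ((div_le_div_iff_of_pos_right hhpos).mpr (by linarith [h1.2]))
  have hinj : Set.InjOn ι s := by
    intro p hp q hq hpq
    by_contra hne
    have hd2 : δ ≤ dist p q := hsep p hp q hq hne
    have hlt : ∀ k, |b.repr (p - c) k - b.repr (q - c) k| < h := by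
      intro k
      have := floor_eq_abs_sub_lt _ _ (congrFun hpq k)
      have hx : (b.repr (p - c) k + R * g k) / h - (b.repr (q - c) k + R * g k) / h
          = (b.repr (p - c) k - b.repr (q - c) k) / h := by ring
      rw [hx] at this
      rw [abs_div, abs_of_pos hhpos, div_lt_one hhpos] at this
      exact this
    have hdist : dist p q ^ 2 < δ ^ 2 / 4 := by
      have hnorm : dist p q = ‖b.repr (p - q)‖ := by
        rw [dist_eq_norm, b.repr.norm_map]
      have hsum : ‖b.repr (p - q)‖ ^ 2 = ∑ k, (b.repr (p - q) k) ^ 2 := by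
        rw [EuclideanSpace.norm_eq, Real.sq_sqrt (by positivity)]
        congr 1; ext k; rw [Real.norm_eq_abs, sq_abs]
      have hco : ∀ k, b.repr (p - q) k = b.repr (p - c) k - b.repr (q - c) k := by
        intro k
        have : p - q = (p - c) - (q - c) := by abel
        rw [this, map_sub]; rfl
      have hterm : ∀ k, (b.repr (p - q) k) ^ 2 < h ^ 2 := by
        intro k
        rw [hco k]
        have := hlt k
        nlinarith [abs_nonneg (b.repr (p - c) k - b.repr (q - c) k),
          sq_abs (b.repr (p - c) k - b.repr (q - c) k),
          sq_nonneg (b.repr (p - c) k - b.repr (q - c) k)]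
      have : ∑ k, (b.repr (p - q) k) ^ 2 < ∑ k : Fin d, h ^ 2 := by
        apply Finset.sum_lt_sum_of_nonempty
        · exact Finset.univ_nonempty_iff.mpr ⟨⟨0, hd⟩⟩
        · intro k _; exact hterm k
      rw [hnorm, hsum]
      have hc : (∑ _k : Fin d, h ^ 2) = d * h ^ 2 := by
        rw [Finset.sum_const, Finset.card_univ, Fintype.card_fin, nsmul_eq_mul]
      rw [hc] at this
      have hdpos : (0:ℝ) < d := by exact_mod_cast hd
      have hh2 : (d:ℝ) * h ^ 2 = δ ^ 2 / 4 := by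
        rw [hh, div_pow, mul_pow, Real.sq_sqrt hdpos.le]
        field_simp
        ring
      rw [hh2] at this
      exact this
    nlinarith [dist_nonneg (x := p) (y := q), hδ]
  -- cardinality count
  have hcard : (s.card : ℝ) ≤ ∏ k : Fin d, (2 * R * g k / h + 1) := by
    have hle : s.card ≤ (Fintype.piFinset fun k => Finset.Icc (0:ℤ) ⌊2 * R * g k / h⌋).card := by
      apply Finset.card_le_card_of_injOn ι
      · intro p hp
        rw [Finset.mem_coe, Fintype.mem_piFinset]
        exact hmem p hp
      · exact hinj
    calc (s.card : ℝ) ≤ ((Fintype.piFinset fun k => Finset.Icc (0:ℤ) ⌊2 * R * g k / h⌋).card : ℝ) := by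
          exact_mod_cast hle
      _ = ∏ k : Fin d, ((Finset.Icc (0:ℤ) ⌊2 * R * g k / h⌋).card : ℝ) := by
          rw [Fintype.card_piFinset]; push_cast; ring
      _ ≤ ∏ k : Fin d, (2 * R * g k / h + 1) := by
          apply Finset.prod_le_prod
          · intro k _; exact Nat.cast_nonneg _
          · intro k _
            have hnn : (0:ℝ) ≤ 2 * R * g k / h :=
              div_nonneg (mul_nonneg (by linarith : (0:ℝ) ≤ 2 * R) (hg k).le) hhpos.le
            have h0 : (0:ℤ) ≤ ⌊2 * R * g k / h⌋ := Int.floor_nonneg.mpr hnn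
            rw [Int.card_Icc]
            have hcast : (((⌊2 * R * g k / h⌋ + 1 - 0).toNat : ℕ) : ℝ)
                = (⌊2 * R * g k / h⌋ : ℝ) + 1 := by
              have h2 : ((⌊2 * R * g k / h⌋ + 1 - 0).toNat : ℤ) = ⌊2 * R * g k / h⌋ + 1 := by
                rw [Int.toNat_of_nonneg (by omega)]; ring
              exact_mod_cast congrArg (fun z : ℤ => (z : ℝ)) h2
            rw [hcast]
            have := Int.floor_le (2 * R * g k / h)
            linarith
  -- rewrite in terms of sval
  have hre : ∏ k : Fin d, (4 * Real.sqrt d * R * sval M k / δ + 1)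
      = ∏ k : Fin d, (4 * Real.sqrt d * R * g k / δ + 1) := by
    calc ∏ k : Fin d, (4 * Real.sqrt d * R * sval M k / δ + 1)
        = ∏ k : Fin d, (4 * Real.sqrt d * R * g (e k) / δ + 1) := by
          apply Finset.prod_congr rfl; intro k _; rw [hsv k]
      _ = ∏ k : Fin d, (4 * Real.sqrt d * R * g k / δ + 1) :=
          Equiv.prod_comp e (fun k => 4 * Real.sqrt d * R * g k / δ + 1)
  rw [hre]
  have : ∀ k, 2 * R * g k / h = 4 * Real.sqrt d * R * g k / δ := by
    intro k
    rw [hh]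
    field_simp
    ring
  calc (s.card : ℝ) ≤ ∏ k : Fin d, (2 * R * g k / h + 1) := hcard
    _ = ∏ k : Fin d, (4 * Real.sqrt d * R * g k / δ + 1) := by
        apply Finset.prod_congr rfl; intro k _; rw [this k]



section Seq

lemma seqComp_add {E : Type*} (m : ℕ) :
    ∀ (n : ℕ) (F : ℕ → E → E), seqComp F (n + m) = seqComp F n ∘ seqComp (fun k => F (n + k)) m := by
  intro n
  induction n with
  | zero =>
    intro F
    funext y
    simp [seqComp, Nat.zero_add]
  | succ n ih =>
    intro F
    have h1 : n + 1 + m = (n + m) + 1 := by ring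
    rw [h1]
    show (fun y => F 0 (seqComp (fun k => F (k + 1)) (n + m) y))
        = seqComp F (n + 1) ∘ seqComp (fun k => F (n + 1 + k)) m
    rw [ih (fun k => F (k + 1))]
    funext y
    show F 0 (seqComp (fun k => F (k + 1)) n (seqComp (fun k => F (n + k + 1)) m y))
        = seqComp F (n+1) (seqComp (fun k => F (n + 1 + k)) m y)
    have h2 : (fun k => F (n + k + 1)) = (fun k => F (n + 1 + k)) := by
      funext k; congr 1; ring
    rw [h2]
    rfl

lemma seqComp_congr {E : Type*} :
    ∀ (n : ℕ) (F G : ℕ → E → E), (∀ k < n, F k = G k) → seqComp F n = seqComp G n := by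
  intro n
  induction n with
  | zero => intro F G _; rfl
  | succ n ih =>
    intro F G h
    show F 0 ∘ seqComp (fun k => F (k + 1)) n = G 0 ∘ seqComp (fun k => G (k + 1)) n
    rw [h 0 (Nat.succ_pos n), ih (fun k => F (k + 1)) (fun k => G (k + 1))
      (fun k hk => h (k + 1) (by omega))]

variable {m d : ℕ} (T : Fin m → Matrix (Fin d) (Fin d) ℝ)

lemma wordProd_zero (x : ℕ → Fin m) : wordProd T x 0 = 1 := rfl

lemma wordProd_succ_left (x : ℕ → Fin m) (n : ℕ) :
    wordProd T x (n + 1) = T (x 0) * wordProd T (fun k => x (k + 1)) n := by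
  rw [wordProd, wordProd, List.range_succ_eq_map]
  simp [List.map_map, Function.comp_def]

lemma wordProd_congr (x y : ℕ → Fin m) (n : ℕ) (h : ∀ k < n, x k = y k) :
    wordProd T x n = wordProd T y n := by
  rw [wordProd, wordProd]
  congr 1
  apply List.map_congr_left
  intro k hk
  rw [h k (List.mem_range.mp hk)]

lemma isUnit_wordProd (hTinv : ∀ i, IsUnit (T i)) (x : ℕ → Fin m) (n : ℕ) :
    IsUnit (wordProd T x n) := by
  induction n generalizing x with
  | zero => rw [wordProd_zero]; exact isUnit_one
  | succ n ih => rw [wordProd_succ_left]; exact (hTinv (x 0)).mul (ih _)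

lemma norm_mCLM_wordProd_le {αp : ℝ} (hT : ∀ i, ‖mCLM (T i)‖ ≤ αp) (hαp0 : 0 ≤ αp)
    (x : ℕ → Fin m) (n : ℕ) : ‖mCLM (wordProd T x n)‖ ≤ αp ^ n := by
  induction n generalizing x with
  | zero =>
    rw [wordProd_zero, mCLM_one, pow_zero, ContinuousLinearMap.one_def]
    exact ContinuousLinearMap.norm_id_le
  | succ n ih =>
    rw [wordProd_succ_left, pow_succ']
    calc ‖mCLM (T (x 0) * wordProd T (fun k => x (k+1)) n)‖
        ≤ ‖mCLM (T (x 0))‖ * ‖mCLM (wordProd T (fun k => x (k+1)) n)‖ := norm_mCLM_mul_le _ _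
      _ ≤ αp * αp ^ n := mul_le_mul (hT _) (ih _) (norm_nonneg _) hαp0

variable (a : Fin m → EuclideanSpace ℝ (Fin d))

/-- Abbreviation for the iterated affine maps. -/
def affSeq (x : ℕ → Fin m) : ℕ → EuclideanSpace ℝ (Fin d) → EuclideanSpace ℝ (Fin d) :=
  fun k y => mCLM (T (x k)) y + a (x k)

lemma codingMap_eq_limUnder (x : ℕ → Fin m) :
    codingMap T a x = limUnder atTop fun n => seqComp (affSeq T a x) n 0 := rfl

lemma affSeq_shift (x : ℕ → Fin m) (n : ℕ) :
    (fun k => affSeq T a x (n + k)) = affSeq T a (fun k => x (n + k)) := rfl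

lemma seqComp_affine (x : ℕ → Fin m) (n : ℕ) (y z : EuclideanSpace ℝ (Fin d)) :
    seqComp (affSeq T a x) n y - seqComp (affSeq T a x) n z
      = mCLM (wordProd T x n) (y - z) := by
  induction n generalizing x y z with
  | zero => rw [wordProd_zero, mCLM_one]; rfl
  | succ n ih =>
    show affSeq T a x 0 (seqComp (fun k => affSeq T a x (k + 1)) n y)
        - affSeq T a x 0 (seqComp (fun k => affSeq T a x (k + 1)) n z) = _
    have hsh : (fun k => affSeq T a x (k + 1)) = affSeq T a (fun k => x (k + 1)) := rfl
    rw [hsh]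
    show (mCLM (T (x 0)) (seqComp (affSeq T a fun k => x (k+1)) n y) + a (x 0))
        - (mCLM (T (x 0)) (seqComp (affSeq T a fun k => x (k+1)) n z) + a (x 0)) = _
    rw [wordProd_succ_left]
    rw [mCLM_mul_apply, ← ih (fun k => x (k+1)) y z]
    rw [map_sub]
    abel


lemma geom_sum_le_inv {r : ℝ} (h0 : 0 ≤ r) (h1 : r < 1) (n : ℕ) :
    ∑ k ∈ Finset.range n, r ^ k ≤ (1 - r)⁻¹ := by
  rw [geom_sum_eq (by linarith : r ≠ 1)]
  have hpos : 0 < 1 - r := by linarith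
  have h2 : (r ^ n - 1) / (r - 1) = (1 - r ^ n) / (1 - r) := by
    rw [div_eq_div_iff (by linarith) (by linarith)]
    ring
  rw [h2]
  have h3 : (1 : ℝ) - r ^ n ≤ 1 := by nlinarith [pow_nonneg h0 n]
  calc (1 - r ^ n) / (1 - r) ≤ 1 / (1 - r) := by gcongr
    _ = (1 - r)⁻¹ := one_div _

lemma seqComp_apply_zero_succ (x : ℕ → Fin m) (n : ℕ) :
    seqComp (affSeq T a x) (n + 1) 0 = seqComp (affSeq T a x) n (a (x n)) := by
  rw [seqComp_add 1 n (affSeq T a x)]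
  show seqComp (affSeq T a x) n (seqComp (fun k => affSeq T a x (n + k)) 1 0) = _
  congr 1
  show affSeq T a x (n + 0) (id 0) = a (x n)
  simp [affSeq]

variable {αp A : ℝ}

lemma dist_partial (hT : ∀ i, ‖mCLM (T i)‖ ≤ αp) (hαp0 : 0 ≤ αp)
    (hA : ∀ i, ‖a i‖ ≤ A) (hA0 : 0 ≤ A) (x : ℕ → Fin m) (n : ℕ) :
    dist (seqComp (affSeq T a x) n 0) (seqComp (affSeq T a x) (n + 1) 0) ≤ A * αp ^ n := by
  rw [seqComp_apply_zero_succ, dist_eq_norm, seqComp_affine]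
  calc ‖mCLM (wordProd T x n) (0 - a (x n))‖
      ≤ ‖mCLM (wordProd T x n)‖ * ‖(0:EuclideanSpace ℝ (Fin d)) - a (x n)‖ :=
        (mCLM (wordProd T x n)).le_opNorm _
    _ ≤ αp ^ n * A := by
        apply mul_le_mul (norm_mCLM_wordProd_le T hT hαp0 x n) _ (norm_nonneg _)
          (pow_nonneg hαp0 n)
        rw [zero_sub, norm_neg]
        exact hA _
    _ = A * αp ^ n := mul_comm _ _

lemma tendsto_codingMap (hT : ∀ i, ‖mCLM (T i)‖ ≤ αp) (hαp0 : 0 ≤ αp) (hαp1 : αp < 1)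
    (hA : ∀ i, ‖a i‖ ≤ A) (hA0 : 0 ≤ A) (x : ℕ → Fin m) :
    Tendsto (fun n => seqComp (affSeq T a x) n 0) atTop (𝓝 (codingMap T a x)) := by
  have hc : CauchySeq (fun n => seqComp (affSeq T a x) n 0) :=
    cauchySeq_of_le_geometric αp A hαp1 (fun n => dist_partial T a hT hαp0 hA hA0 x n)
  rcases cauchySeq_tendsto_of_complete hc with ⟨L, hL⟩
  rw [codingMap_eq_limUnder]
  exact tendsto_nhds_limUnder ⟨L, hL⟩

lemma partial_norm_le (hT : ∀ i, ‖mCLM (T i)‖ ≤ αp) (hαp0 : 0 ≤ αp)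
    (hA : ∀ i, ‖a i‖ ≤ A) (hA0 : 0 ≤ A) (x : ℕ → Fin m) (n : ℕ) :
    ‖seqComp (affSeq T a x) n 0‖ ≤ A * ∑ k ∈ Finset.range n, αp ^ k := by
  induction n with
  | zero => simp [seqComp]
  | succ n ih =>
    rw [seqComp_apply_zero_succ]
    have h1 : ‖seqComp (affSeq T a x) n (a (x n)) - seqComp (affSeq T a x) n 0‖ ≤ αp ^ n * A := by
      rw [seqComp_affine]
      calc ‖mCLM (wordProd T x n) (a (x n) - 0)‖
          ≤ ‖mCLM (wordProd T x n)‖ * ‖a (x n) - 0‖ := (mCLM _).le_opNorm _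
        _ ≤ αp ^ n * A := by
            apply mul_le_mul (norm_mCLM_wordProd_le T hT hαp0 x n) _ (norm_nonneg _)
              (pow_nonneg hαp0 n)
            rw [sub_zero]; exact hA _
    calc ‖seqComp (affSeq T a x) n (a (x n))‖
        ≤ ‖seqComp (affSeq T a x) n (a (x n)) - seqComp (affSeq T a x) n 0‖
          + ‖seqComp (affSeq T a x) n 0‖ := by
            simpa using norm_add_le
              (seqComp (affSeq T a x) n (a (x n)) - seqComp (affSeq T a x) n 0)
              (seqComp (affSeq T a x) n 0)
      _ ≤ αp ^ n * A + A * ∑ k ∈ Finset.range n, αp ^ k := add_le_add h1 ih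
      _ = A * ∑ k ∈ Finset.range (n + 1), αp ^ k := by
          rw [Finset.sum_range_succ]; ring

lemma norm_codingMap_le (hT : ∀ i, ‖mCLM (T i)‖ ≤ αp) (hαp0 : 0 ≤ αp) (hαp1 : αp < 1)
    (hA : ∀ i, ‖a i‖ ≤ A) (hA0 : 0 ≤ A) (x : ℕ → Fin m) :
    ‖codingMap T a x‖ ≤ A * (1 - αp)⁻¹ := by
  apply le_of_tendsto' ((tendsto_codingMap T a hT hαp0 hαp1 hA hA0 x).norm)
  intro n
  calc ‖seqComp (affSeq T a x) n 0‖ ≤ A * ∑ k ∈ Finset.range n, αp ^ k :=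
      partial_norm_le T a hT hαp0 hA hA0 x n
    _ ≤ A * (1 - αp)⁻¹ := mul_le_mul_of_nonneg_left (geom_sum_le_inv hαp0 hαp1 n) hA0

lemma continuous_seqComp_affine (x : ℕ → Fin m) (n : ℕ) :
    Continuous (seqComp (affSeq T a x) n) := by
  have h : (seqComp (affSeq T a x) n)
      = fun y => mCLM (wordProd T x n) y + seqComp (affSeq T a x) n 0 := by
    funext y
    have h2 := seqComp_affine T a x n y 0
    rw [sub_zero] at h2
    have := eq_add_of_sub_eq h2
    rw [this]
  rw [h]
  exact ((mCLM (wordProd T x n)).continuous).add continuous_const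

lemma codingMap_shift (hT : ∀ i, ‖mCLM (T i)‖ ≤ αp) (hαp0 : 0 ≤ αp) (hαp1 : αp < 1)
    (hA : ∀ i, ‖a i‖ ≤ A) (hA0 : 0 ≤ A) (x : ℕ → Fin m) (n : ℕ) :
    codingMap T a x = seqComp (affSeq T a x) n (codingMap T a (fun k => x (n + k))) := by
  have h1 : Tendsto (fun M => seqComp (affSeq T a x) (n + M) 0) atTop (𝓝 (codingMap T a x)) := by
    have hadd : Tendsto (fun M : ℕ => n + M) atTop atTop := by
      apply tendsto_atTop_mono (fun M => Nat.le_add_left M n) tendsto_id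
    exact (tendsto_codingMap T a hT hαp0 hαp1 hA hA0 x).comp hadd
  have h2 : ∀ M, seqComp (affSeq T a x) (n + M) 0
      = seqComp (affSeq T a x) n (seqComp (affSeq T a (fun k => x (n + k))) M 0) := by
    intro M
    rw [seqComp_add M n (affSeq T a x), affSeq_shift]
    rfl
  have h4 : Tendsto (fun M => seqComp (affSeq T a x) n
        (seqComp (affSeq T a (fun k => x (n + k))) M 0)) atTop
      (𝓝 (seqComp (affSeq T a x) n (codingMap T a (fun k => x (n + k))))) :=
    ((continuous_seqComp_affine T a x n).tendsto _).comp
      (tendsto_codingMap T a hT hαp0 hαp1 hA hA0 _)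
  refine tendsto_nhds_unique h1 ?_
  have : (fun M => seqComp (affSeq T a x) (n + M) 0)
      = fun M => seqComp (affSeq T a x) n (seqComp (affSeq T a (fun k => x (n + k))) M 0) := by
    funext M; exact h2 M
  rw [this]
  exact h4

lemma codingMap_cylinder_box (hT : ∀ i, ‖mCLM (T i)‖ ≤ αp) (hαp0 : 0 ≤ αp) (hαp1 : αp < 1)
    (hA : ∀ i, ‖a i‖ ≤ A) (hA0 : 0 ≤ A) (x y : ℕ → Fin m) (n : ℕ) (hy : y ∈ cylinder x n) :
    ∃ v : EuclideanSpace ℝ (Fin d), ‖v‖ ≤ 2 * (A * (1 - αp)⁻¹) ∧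
      codingMap T a y = codingMap T a x + mCLM (wordProd T x n) v := by
  set R : ℝ := A * (1 - αp)⁻¹ with hR
  set cy := codingMap T a (fun k => y (n + k)) with hcy
  set cx := codingMap T a (fun k => x (n + k)) with hcx
  refine ⟨cy - cx, ?_, ?_⟩
  · calc ‖cy - cx‖ ≤ ‖cy‖ + ‖cx‖ := norm_sub_le _ _
      _ ≤ R + R := add_le_add (norm_codingMap_le T a hT hαp0 hαp1 hA hA0 _)
          (norm_codingMap_le T a hT hαp0 hαp1 hA hA0 _)
      _ = 2 * R := by ring
  · have hSC : seqComp (affSeq T a y) n = seqComp (affSeq T a x) n := by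
      apply seqComp_congr
      intro k hk
      funext z
      show mCLM (T (y k)) z + a (y k) = mCLM (T (x k)) z + a (x k)
      rw [hy k hk]
    have hy2 := codingMap_shift T a hT hαp0 hαp1 hA hA0 y n
    have hx2 := codingMap_shift T a hT hαp0 hαp1 hA hA0 x n
    rw [hSC] at hy2
    have hdiff : codingMap T a y - codingMap T a x = mCLM (wordProd T x n) (cy - cx) := by
      rw [hy2, hx2]
      exact seqComp_affine T a x n cy cx
    have := eq_add_of_sub_eq hdiff
    rw [this]
    abel

end Seq



section Zfacts

variable {d : ℕ}

lemma Zmat_factor_le_one {M : Matrix (Fin d) (Fin d) ℝ} {r : ℝ} (hr : 0 < r)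
    {k : Fin d} (hs : 0 < sval M k) : min r (sval M k) / sval M k ≤ 1 := by
  rw [div_le_one hs]
  exact min_le_right _ _

lemma Zmat_factor_nonneg {M : Matrix (Fin d) (Fin d) ℝ} {r : ℝ} (hr : 0 < r)
    {k : Fin d} (hs : 0 < sval M k) : 0 ≤ min r (sval M k) / sval M k :=
  div_nonneg (le_min hr.le hs.le) hs.le

lemma Zmat_factor_ge {M : Matrix (Fin d) (Fin d) ℝ} {r : ℝ} (hr : 0 < r) (hr1 : r ≤ 1)
    {k : Fin d} (hs : 0 < sval M k) (hs1 : sval M k ≤ 1) :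
    r ≤ min r (sval M k) / sval M k := by
  rcases le_total (sval M k) r with h | h
  · rw [min_eq_right h, div_self hs.ne']
    exact hr1
  · rw [min_eq_left h, le_div_iff₀ hs]
    nlinarith

lemma Zmat_le_one (hd : 1 ≤ d) {M : Matrix (Fin d) (Fin d) ℝ} (hM : IsUnit M) {r : ℝ}
    (hr : 0 < r) : Zmat M r ≤ 1 := by
  apply Finset.prod_le_one
  · intro k _; exact Zmat_factor_nonneg hr (sval_pos hd M hM k)
  · intro k _; exact Zmat_factor_le_one hr (sval_pos hd M hM k)

lemma Zmat_nonneg (hd : 1 ≤ d) {M : Matrix (Fin d) (Fin d) ℝ} (hM : IsUnit M) {r : ℝ}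
    (hr : 0 < r) : 0 ≤ Zmat M r :=
  Finset.prod_nonneg fun k _ => Zmat_factor_nonneg hr (sval_pos hd M hM k)

lemma Zmat_ge (hd : 1 ≤ d) {M : Matrix (Fin d) (Fin d) ℝ} (hM : IsUnit M)
    (hnorm : ‖mCLM M‖ ≤ 1) {r : ℝ} (hr : 0 < r) (hr1 : r ≤ 1) :
    r ^ d ≤ Zmat M r := by
  have h1 : ∀ k : Fin d, sval M k ≤ 1 := fun k => (sval_le_norm hd M hM k).trans hnorm
  calc r ^ d = ∏ _k : Fin d, r := by
        rw [Finset.prod_const, Finset.card_univ, Fintype.card_fin]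
    _ ≤ ∏ k : Fin d, min r (sval M k) / sval M k := by
        apply Finset.prod_le_prod
        · intro k _; exact hr.le
        · intro k _; exact Zmat_factor_ge hr hr1 (sval_pos hd M hM k) (h1 k)

lemma Zmat_eq_one (hd : 1 ≤ d) {M : Matrix (Fin d) (Fin d) ℝ} (hM : IsUnit M) {r : ℝ}
    (h : ∀ k, sval M k ≤ r) : Zmat M r = 1 := by
  apply Finset.prod_eq_one
  intro k _
  rw [min_eq_right (h k), div_self (sval_pos hd M hM k).ne']

end Zfacts

section FD

variable {m : ℕ}

lemma firstDiff_spec {x y : ℕ → Fin m} (h : x ≠ y) :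
    x (firstDiff x y) ≠ y (firstDiff x y) := by
  have hne : { n | x n ≠ y n }.Nonempty := by
    by_contra hc
    rw [Set.not_nonempty_iff_eq_empty] at hc
    refine h (funext fun k => ?_)
    by_contra hk
    have hmem : k ∈ { n | x n ≠ y n } := hk
    rw [hc] at hmem
    exact hmem
  exact Nat.sInf_mem hne

lemma firstDiff_lt {x y : ℕ → Fin m} {k : ℕ} (hk : k < firstDiff x y) : x k = y k := by
  by_contra hc
  have hmem : k ∈ { n | x n ≠ y n } := hc
  have h1 : firstDiff x y ≤ k := Nat.sInf_le hmem
  omega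

lemma firstDiff_eq {x y : ℕ → Fin m} {n : ℕ} (h1 : ∀ k < n, x k = y k) (h2 : x n ≠ y n) :
    firstDiff x y = n := by
  apply le_antisymm
  · exact Nat.sInf_le h2
  · apply le_csInf ⟨n, h2⟩
    intro b hb
    by_contra hc
    exact hb (h1 b (by omega))

end FD


section Meas

variable {m d : ℕ} (T : Fin m → Matrix (Fin d) (Fin d) ℝ)

lemma Zwedge_self (x : ℕ → Fin m) (r : ℝ) : Zwedge T x x r = 1 := by
  rw [Zwedge]
  simp

lemma Zwedge_ne {x y : ℕ → Fin m} (h : x ≠ y) (r : ℝ) :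
    Zwedge T x y r = Zword T x (firstDiff x y) r := by
  rw [Zwedge]
  simp [h]

lemma Zwedge_le_one (hd : 1 ≤ d) (hTinv : ∀ i, IsUnit (T i)) {r : ℝ} (hr : 0 < r)
    (x y : ℕ → Fin m) : Zwedge T x y r ≤ 1 := by
  by_cases h : x = y
  · rw [h, Zwedge_self]
  · rw [Zwedge_ne T h]
    exact Zmat_le_one hd (isUnit_wordProd T hTinv x _) hr

lemma Zwedge_nonneg (hd : 1 ≤ d) (hTinv : ∀ i, IsUnit (T i)) {r : ℝ} (hr : 0 < r)
    (x y : ℕ → Fin m) : 0 ≤ Zwedge T x y r := by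
  by_cases h : x = y
  · rw [h, Zwedge_self]; norm_num
  · rw [Zwedge_ne T h]
    exact Zmat_nonneg hd (isUnit_wordProd T hTinv x _) hr

lemma Zwedge_ge (hd : 1 ≤ d) (hTinv : ∀ i, IsUnit (T i)) {αp : ℝ}
    (hT : ∀ i, ‖mCLM (T i)‖ ≤ αp) (hαp0 : 0 ≤ αp) (hαp1 : αp ≤ 1) {r : ℝ} (hr : 0 < r)
    (hr1 : r ≤ 1) (x y : ℕ → Fin m) : r ^ d ≤ Zwedge T x y r := by
  by_cases h : x = y
  · rw [h, Zwedge_self]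
    exact pow_le_one₀ hr.le hr1
  · rw [Zwedge_ne T h]
    apply Zmat_ge hd (isUnit_wordProd T hTinv x _) _ hr hr1
    calc ‖mCLM (wordProd T x (firstDiff x y))‖ ≤ αp ^ (firstDiff x y) :=
        norm_mCLM_wordProd_le T hT hαp0 x _
      _ ≤ 1 := pow_le_one₀ hαp0 hαp1

lemma measurableSet_coordEq_fst (k : ℕ) (c : Fin m) :
    MeasurableSet {p : (ℕ → Fin m) × (ℕ → Fin m) | p.1 k = c} := by
  have h : Measurable (fun p : (ℕ → Fin m) × (ℕ → Fin m) => p.1 k) :=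
    (measurable_pi_apply k).comp measurable_fst
  exact h (measurableSet_singleton c)

lemma measurableSet_coordEq_snd (k : ℕ) (c : Fin m) :
    MeasurableSet {p : (ℕ → Fin m) × (ℕ → Fin m) | p.2 k = c} := by
  have h : Measurable (fun p : (ℕ → Fin m) × (ℕ → Fin m) => p.2 k) :=
    (measurable_pi_apply k).comp measurable_snd
  exact h (measurableSet_singleton c)

lemma measurableSet_coordAgree (k : ℕ) :
    MeasurableSet {p : (ℕ → Fin m) × (ℕ → Fin m) | p.1 k = p.2 k} := by
  have h : {p : (ℕ → Fin m) × (ℕ → Fin m) | p.1 k = p.2 k}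
      = ⋃ c : Fin m, ({p : (ℕ → Fin m) × (ℕ → Fin m) | p.1 k = c}
          ∩ {p : (ℕ → Fin m) × (ℕ → Fin m) | p.2 k = c}) := by
    ext p
    simp only [Set.mem_setOf_eq, Set.mem_iUnion, Set.mem_inter_iff]
    constructor
    · intro hp; exact ⟨p.2 k, hp, rfl⟩
    · rintro ⟨c, h1, h2⟩; rw [h1, h2]
  rw [h]
  exact MeasurableSet.iUnion fun c =>
    (measurableSet_coordEq_fst k c).inter (measurableSet_coordEq_snd k c)

lemma measurable_Zwedge_pair (r : ℝ) :
    Measurable (fun p : (ℕ → Fin m) × (ℕ → Fin m) => Zwedge T p.1 p.2 r) := by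
  classical
  letI : MeasurableSpace (Option (List (Fin m))) := ⊤
  set e : (ℕ → Fin m) × (ℕ → Fin m) → Option (List (Fin m)) :=
    fun p => if p.1 = p.2 then none else some ((List.range (firstDiff p.1 p.2)).map p.1)
    with he
  have hKe : (fun p : (ℕ → Fin m) × (ℕ → Fin m) => Zwedge T p.1 p.2 r)
      = (fun o : Option (List (Fin m)) =>
          Option.elim o 1 (fun I => Zmat ((I.map T).prod) r)) ∘ e := by
    funext p
    by_cases hp : p.1 = p.2
    · simp only [Function.comp_apply, he, if_pos hp, Option.elim]
      rw [hp, Zwedge_self]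
    · simp only [Function.comp_apply, he, if_neg hp, Option.elim]
      rw [Zwedge_ne T hp, Zword, wordProd, List.map_map]
      rfl
  rw [hKe]
  apply Measurable.comp
  · exact measurable_from_top
  · apply measurable_to_countable
    intro p
    by_cases hp : p.1 = p.2
    · have hpre : e ⁻¹' {e p} = ⋂ k : ℕ, {q : (ℕ → Fin m) × (ℕ → Fin m) | q.1 k = q.2 k} := by
        ext q
        simp only [Set.mem_preimage, Set.mem_singleton_iff, Set.mem_iInter, Set.mem_setOf_eq]
        rw [he]
        simp only [if_pos hp]
        constructor
        · intro hq k
          by_cases hq2 : q.1 = q.2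
          · rw [hq2]
          · simp only [if_neg hq2] at hq
            exact absurd hq (by simp)
        · intro hq
          have hq2 : q.1 = q.2 := funext hq
          simp only [if_pos hq2]
      rw [hpre]
      exact MeasurableSet.iInter fun k => measurableSet_coordAgree k
    · set n := firstDiff p.1 p.2 with hn
      have hpre : e ⁻¹' {e p}
          = (⋂ k ∈ Finset.range n, ({q : (ℕ → Fin m) × (ℕ → Fin m) | q.1 k = p.1 k}
              ∩ {q : (ℕ → Fin m) × (ℕ → Fin m) | q.2 k = p.1 k}))
            ∩ ({q : (ℕ → Fin m) × (ℕ → Fin m) | q.1 n = q.2 n})ᶜ := by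
        ext q
        simp only [Set.mem_preimage, Set.mem_singleton_iff, Set.mem_inter_iff, Set.mem_iInter,
          Set.mem_compl_iff, Set.mem_setOf_eq, Finset.mem_range]
        rw [he]
        simp only [if_neg hp]
        constructor
        · intro hq
          by_cases hq2 : q.1 = q.2
          · rw [if_pos hq2] at hq
            exact absurd hq (by simp)
          · rw [if_neg hq2] at hq
            have hlist : (List.range (firstDiff q.1 q.2)).map q.1 = (List.range n).map p.1 :=
              Option.some_injective _ hq
            have hlen : firstDiff q.1 q.2 = n := by
              have h1 := congrArg List.length hlist
              simpa using h1
            have hcoords : ∀ k, k < n → q.1 k = p.1 k := by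
              intro k hk
              have h1 := congrArg (fun l => l[k]?) hlist
              rw [hlen] at h1
              simp only [List.getElem?_map, List.getElem?_range hk] at h1
              simpa using h1
            refine ⟨fun k hk => ⟨hcoords k hk, ?_⟩, ?_⟩
            · have hq12 : q.1 k = q.2 k := firstDiff_lt (x := q.1) (y := q.2) (hlen ▸ hk)
              rw [← hq12]
              exact hcoords k hk
            · rw [← hlen]
              exact fun hc => firstDiff_spec hq2 hc
        · rintro ⟨hagree, hne⟩
          have hq2 : q.1 ≠ q.2 := fun hc => hne (congrFun hc n)
          rw [if_neg hq2]
          have hfd : firstDiff q.1 q.2 = n :=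
            firstDiff_eq (fun k hk => ((hagree k hk).1).trans ((hagree k hk).2).symm) hne
          rw [hfd]
          congr 1
          apply List.map_congr_left
          intro k hk
          exact (hagree k (List.mem_range.mp hk)).1
      rw [hpre]
      refine MeasurableSet.inter ?_ (measurableSet_coordAgree n).compl
      exact MeasurableSet.biInter (Set.to_countable _)
        (fun k _ => (measurableSet_coordEq_fst k (p.1 k)).inter
          (measurableSet_coordEq_snd k (p.1 k)))

lemma measurable_Zwedge_right (x : ℕ → Fin m) (r : ℝ) :
    Measurable (fun y : ℕ → Fin m => Zwedge T x y r) :=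
  (measurable_Zwedge_pair T r).comp (measurable_prodMk_left (x := x))

end Meas



section Energy

variable {m d : ℕ} (T : Fin m → Matrix (Fin d) (Fin d) ℝ)

lemma factor_mul_le {r sv c : ℝ} (hr : 0 < r) (hs : 0 < sv) (hc : 0 ≤ c) :
    (c * sv / r + 1) * (min r sv / sv) ≤ c + 1 := by
  rcases le_total sv r with h | h
  · rw [min_eq_right h, div_self hs.ne']
    have h1 : c * sv / r ≤ c := by
      rw [div_le_iff₀ hr]
      nlinarith
    linarith
  · rw [min_eq_left h]
    have h1 : (c * sv / r + 1) * (r / sv) = c + r / sv := by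
      field_simp
    have hrs : r / sv ≤ 1 := by rw [div_le_one hs]; exact h
    rw [h1]
    linarith

lemma integrable_Zwedge (hd : 1 ≤ d) (hTinv : ∀ i, IsUnit (T i)) {r : ℝ} (hr : 0 < r)
    (μ : Measure (ℕ → Fin m)) [IsFiniteMeasure μ] (x : ℕ → Fin m) :
    Integrable (fun y => Zwedge T x y r) μ := by
  apply (integrable_const (1:ℝ)).mono' (measurable_Zwedge_right T x r).aestronglyMeasurable
  refine ae_of_all _ fun y => ?_
  rw [Real.norm_eq_abs, abs_of_nonneg (Zwedge_nonneg T hd hTinv hr x y)]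
  exact Zwedge_le_one T hd hTinv hr x y

lemma integrable_inner_int (hd : 1 ≤ d) (hTinv : ∀ i, IsUnit (T i)) {r : ℝ} (hr : 0 < r)
    (μ : Measure (ℕ → Fin m)) [IsProbabilityMeasure μ] :
    Integrable (fun x => ∫ y, Zwedge T x y r ∂μ) μ := by
  have hGm : StronglyMeasurable (fun x => ∫ y, Zwedge T x y r ∂μ) := by
    have := ((measurable_Zwedge_pair T r).stronglyMeasurable).integral_prod_right'
      (ν := μ)
    exact this
  apply (integrable_const (1:ℝ)).mono' hGm.aestronglyMeasurable
  refine ae_of_all _ fun x => ?_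
  rw [Real.norm_eq_abs,
    abs_of_nonneg (integral_nonneg fun y => Zwedge_nonneg T hd hTinv hr x y)]
  calc ∫ y, Zwedge T x y r ∂μ ≤ ∫ _y, (1:ℝ) ∂μ :=
      integral_mono (integrable_Zwedge T hd hTinv hr μ x) (integrable_const _)
        (fun y => Zwedge_le_one T hd hTinv hr x y)
    _ = 1 := by simp

lemma energy_lower (hd : 1 ≤ d) (hTinv : ∀ i, IsUnit (T i)) {αp : ℝ}
    (hT : ∀ i, ‖mCLM (T i)‖ ≤ αp) (hαp0 : 0 ≤ αp) (hαp1 : αp ≤ 1) {r : ℝ} (hr : 0 < r)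
    (hr1 : r ≤ 1) (μ : Measure (ℕ → Fin m)) [IsProbabilityMeasure μ] :
    r ^ d ≤ energy T μ r := by
  have hinner : ∀ x, r ^ d ≤ ∫ y, Zwedge T x y r ∂μ := by
    intro x
    calc r ^ d = ∫ _y, r ^ d ∂μ := by simp
      _ ≤ ∫ y, Zwedge T x y r ∂μ := by
        apply integral_mono (integrable_const _) (integrable_Zwedge T hd hTinv hr μ x)
        exact fun y => Zwedge_ge T hd hTinv hT hαp0 hαp1 hr hr1 x y
  calc r ^ d = ∫ _x, r ^ d ∂μ := by simp
    _ ≤ ∫ x, ∫ y, Zwedge T x y r ∂μ ∂μ := by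
      apply integral_mono (integrable_const _) (integrable_inner_int T hd hTinv hr μ)
      exact hinner
    _ = energy T μ r := rfl

end Energy



end Auxiliary

set_option maxHeartbeats 1000000 in
theorem statement17 (m d : ℕ) (hm : 1 ≤ m) (hd : 1 ≤ d)
    (T : Fin m → Matrix (Fin d) (Fin d) ℝ)
    (hTinv : ∀ i, IsUnit (T i))
    (hT1 : ∀ i, ‖mCLM (T i)‖ < 1)
    (a : Fin m → EuclideanSpace ℝ (Fin d))
    (αp : ℝ) (hαp : IsGreatest { t : ℝ | ∃ i, t = ‖mCLM (T i)‖ } αp) :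
    ∃ C' : ℝ, 0 < C' ∧
      ∀ E : Set (ℕ → Fin m), E.Nonempty → IsCompact E →
        ∀ r : ℝ, 0 < r → r < αp →
          coverNum (codingMap T a '' E) r
            ≤ ENNReal.ofReal ((Real.log r / Real.log αp + 2) * C' * capFn T E r) := by
  classical
  obtain ⟨⟨i₀, hi₀⟩, hub⟩ := hαp
  have hT_le : ∀ i, ‖mCLM (T i)‖ ≤ αp := fun i => hub ⟨i, rfl⟩
  have hαp1 : αp < 1 := by rw [hi₀]; exact hT1 i₀
  have hαp0 : 0 < αp := by
    rw [hi₀, norm_pos_iff]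
    intro hzero
    have hT0 : T i₀ = 0 := by
      apply (Matrix.toEuclideanCLM (𝕜 := ℝ) (n := Fin d)).injective
      rw [_root_.map_zero]
      exact hzero
    have hzu := hTinv i₀
    rw [hT0] at hzu
    haveI : Nonempty (Fin d) := ⟨⟨0, hd⟩⟩
    exact zero_ne_one (isUnit_zero_iff.mp hzu)
  set A : ℝ := ∑ i, ‖a i‖ with hA
  have hA0 : 0 ≤ A := Finset.sum_nonneg fun i _ => norm_nonneg _
  have hAi : ∀ i, ‖a i‖ ≤ A :=
    fun i => Finset.single_le_sum (fun j _ => norm_nonneg (a j)) (Finset.mem_univ i)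
  set R : ℝ := A * (1 - αp)⁻¹ with hR
  have hR0 : 0 ≤ R := mul_nonneg hA0 (inv_nonneg.mpr (by linarith))
  set c₁ : ℝ := 16 * Real.sqrt d * R with hc₁
  have hc₁0 : 0 ≤ c₁ := by
    have : (0:ℝ) ≤ Real.sqrt d := Real.sqrt_nonneg _
    positivity
  set C1 : ℝ := (c₁ + 1) ^ d with hC1
  have hC1pos : 0 < C1 := pow_pos (by linarith) d
  refine ⟨C1, hC1pos, ?_⟩
  intro E hne hcomp r hr0 hrαp
  have hr1 : r ≤ 1 := le_of_lt (lt_trans hrαp hαp1)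
  obtain ⟨x₀, hx₀⟩ := hne
  -- logarithmic quantities
  set L : ℝ := Real.log r / Real.log αp with hL
  have hlogαp : Real.log αp < 0 := Real.log_neg hαp0 hαp1
  have hlogr : Real.log r ≤ Real.log αp := Real.log_le_log hr0 hrαp.le
  have hL1 : 1 ≤ L := by
    rw [hL, le_div_iff_of_neg hlogαp, one_mul]
    exact hlogr
  set n₀ : ℕ := ⌊L⌋₊ + 1 with hn₀
  have hn₀L : (n₀ : ℝ) + 1 ≤ L + 2 := by
    have h1 : (⌊L⌋₊ : ℝ) ≤ L := Nat.floor_le (by linarith)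
    rw [hn₀]
    push_cast
    linarith
  have hαpn₀ : αp ^ n₀ ≤ r := by
    have h1 : L < (n₀ : ℝ) := by
      rw [hn₀]; push_cast; exact Nat.lt_floor_add_one L
    have h2 : (n₀ : ℝ) * Real.log αp ≤ Real.log r := by
      have h3 : L * Real.log αp = Real.log r := by
        rw [hL, div_mul_eq_mul_div, mul_div_assoc, div_self hlogαp.ne, mul_one]
      nlinarith
    have hpow : αp ^ n₀ = Real.exp ((n₀ : ℝ) * Real.log αp) := by
      rw [← Real.exp_log hαp0, ← Real.exp_nat_mul]
      norm_num [Real.exp_log hαp0]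
    rw [hpow, ← Real.exp_log hr0]
    exact Real.exp_le_exp.mpr h2
  have hsval_small : ∀ x : ℕ → Fin m, ∀ k, sval (wordProd T x n₀) k ≤ r := by
    intro x k
    calc sval (wordProd T x n₀) k ≤ ‖mCLM (wordProd T x n₀)‖ :=
        sval_le_norm hd _ (isUnit_wordProd T hTinv x n₀) k
      _ ≤ αp ^ n₀ := norm_mCLM_wordProd_le T hT_le hαp0.le x n₀
      _ ≤ r := hαpn₀
  -- images of cylinders in boxes
  have hbox : ∀ (x : ℕ → Fin m) (n : ℕ) (y : ℕ → Fin m), y ∈ cylinder x n →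
      ∃ v : EuclideanSpace ℝ (Fin d), ‖v‖ ≤ 2 * R ∧
        codingMap T a y = codingMap T a x + mCLM (wordProd T x n) v := by
    intro x n y hy
    exact codingMap_cylinder_box T a hT_le hαp0.le hαp1 hAi hA0 x y n hy
  -- the key per-word counting estimate
  have hcount : ∀ (x : ℕ → Fin m) (n : ℕ) (t : Finset (EuclideanSpace ℝ (Fin d))),
      (∀ p ∈ t, ∀ q ∈ t, p ≠ q → r / 2 ≤ dist p q) →
      (∀ p ∈ t, ∃ y ∈ cylinder x n, codingMap T a y = p) →
      (t.card : ℝ) * Zword T x n r ≤ C1 := by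
    intro x n t' hsep hcyl
    have hM : IsUnit (wordProd T x n) := isUnit_wordProd T hTinv x n
    have hsvpos : ∀ k, 0 < sval (wordProd T x n) k := sval_pos hd _ hM
    have hcard : (t'.card : ℝ)
        ≤ ∏ k : Fin d, (c₁ * sval (wordProd T x n) k / r + 1) := by
      have h0 := boxCount hd _ hM (2*R) (r/2) (by linarith) (by linarith)
        (codingMap T a x) t' ?_ hsep
      · calc (t'.card : ℝ)
            ≤ ∏ k : Fin d, (4 * Real.sqrt d * (2*R) * sval (wordProd T x n) k / (r/2) + 1) := h0
          _ = ∏ k : Fin d, (c₁ * sval (wordProd T x n) k / r + 1) := by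
              apply Finset.prod_congr rfl
              intro k _
              rw [hc₁]
              field_simp
              ring
      · intro p hp
        rcases hcyl p hp with ⟨y, hy, rfl⟩
        rcases hbox x n y hy with ⟨v, hv, heq⟩
        exact ⟨v, hv, heq⟩
    have hZnn : 0 ≤ Zword T x n r := Zmat_nonneg hd hM hr0
    calc (t'.card : ℝ) * Zword T x n r
        ≤ (∏ k : Fin d, (c₁ * sval (wordProd T x n) k / r + 1)) * Zword T x n r :=
          mul_le_mul_of_nonneg_right hcard hZnn
      _ = ∏ k : Fin d, ((c₁ * sval (wordProd T x n) k / r + 1)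
            * (min r (sval (wordProd T x n) k) / sval (wordProd T x n) k)) := by
          rw [Zword, Zmat, ← Finset.prod_mul_distrib]
      _ ≤ ∏ _k : Fin d, (c₁ + 1) := by
          apply Finset.prod_le_prod
          · intro k _
            apply mul_nonneg
            · have := (hsvpos k).le
              positivity
            · exact Zmat_factor_nonneg hr0 (hsvpos k)
          · intro k _
            exact factor_mul_le hr0 (hsvpos k) hc₁0
      _ = C1 := by
          rw [Finset.prod_const, Finset.card_univ, Fintype.card_fin, hC1]
  -- maximal separated subset of the image
  set F := codingMap T a '' E with hF
  have hFne : F.Nonempty := ⟨codingMap T a x₀, ⟨x₀, hx₀, rfl⟩⟩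
  obtain ⟨t, htF, htsep, htmax, htpos⟩ :
      ∃ t : Finset (EuclideanSpace ℝ (Fin d)), ↑t ⊆ F ∧
        (∀ p ∈ t, ∀ q ∈ t, p ≠ q → r / 2 ≤ dist p q) ∧
        (∀ z ∈ F, ∃ p ∈ t, dist z p < r / 2) ∧ 0 < t.card := by
    set B : ℝ := ∏ k : Fin d, (4 * Real.sqrt d * (2*R) * sval (wordProd T x₀ 0) k / (r/2) + 1)
      with hB
    have hBb : ∀ t : Finset (EuclideanSpace ℝ (Fin d)), ↑t ⊆ F →
        (∀ p ∈ t, ∀ q ∈ t, p ≠ q → r / 2 ≤ dist p q) → (t.card : ℝ) ≤ B := by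
      intro t ht hsept
      apply boxCount hd _ (isUnit_wordProd T hTinv x₀ 0) (2*R) (r/2) (by linarith)
        (by linarith) (codingMap T a x₀) t _ hsept
      intro p hp
      rcases ht hp with ⟨y, hyE, rfl⟩
      rcases hbox x₀ 0 y (fun k hk => absurd hk (Nat.not_lt_zero k)) with ⟨v, hv, heq⟩
      exact ⟨v, hv, heq⟩
    set cards : Set ℕ := { n | ∃ t : Finset (EuclideanSpace ℝ (Fin d)), ↑t ⊆ F ∧
        (∀ p ∈ t, ∀ q ∈ t, p ≠ q → r / 2 ≤ dist p q) ∧ t.card = n } with hcards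
    have h1mem : 1 ∈ cards := by
      refine ⟨{codingMap T a x₀}, ?_, ?_, Finset.card_singleton _⟩
      · intro z hz
        rw [Finset.coe_singleton, Set.mem_singleton_iff] at hz
        rw [hz]
        exact ⟨x₀, hx₀, rfl⟩
      · intro p hp q hq hne
        rw [Finset.mem_singleton] at hp hq
        exact absurd (hp.trans hq.symm) hne
    have hbdd : BddAbove cards := by
      refine ⟨⌊B⌋₊, ?_⟩
      rintro n ⟨t, ht, hsept, rfl⟩
      exact Nat.le_floor (hBb t ht hsept)
    obtain ⟨t, htF, htsep, htcard⟩ := Nat.sSup_mem ⟨1, h1mem⟩ hbdd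
    refine ⟨t, htF, htsep, ?_, ?_⟩
    · intro z hz
      by_contra hcon
      push_neg at hcon
      have hznt : z ∉ t := by
        intro hzt
        have := hcon z hzt
        rw [dist_self] at this
        linarith
      have hins : (insert z t).card ∈ cards := by
        refine ⟨insert z t, ?_, ?_, rfl⟩
        · rw [Finset.coe_insert]
          exact Set.insert_subset hz htF
        · intro p hp q hq hne
          rw [Finset.mem_insert] at hp hq
          rcases hp with rfl | hp
          · rcases hq with rfl | hq
            · exact absurd rfl hne
            · exact hcon q hq
          · rcases hq with rfl | hq
            · rw [dist_comm]
              exact hcon p hp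
            · exact htsep p hp q hq hne
      have hle := le_csSup hbdd hins
      rw [Finset.card_insert_of_notMem hznt, htcard] at hle
      omega
    · have hle := le_csSup hbdd h1mem
      omega
  set N : ℕ := t.card with hN
  -- covering estimate
  have hcover : coverNum F r ≤ (N : ℝ≥0∞) := by
    set C : Finset (Set (EuclideanSpace ℝ (Fin d))) :=
      t.image (fun p => closedBall p (r/2)) with hCC
    have h1 : F ⊆ ⋃ s ∈ C, s := by
      intro z hz
      rcases htmax z hz with ⟨p, hp, hdist⟩
      apply Set.mem_biUnion (Finset.mem_coe.mpr (Finset.mem_image_of_mem _ hp))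
      exact mem_closedBall.mpr hdist.le
    have h2 : ∀ s ∈ C, Metric.diam s ≤ r := by
      intro s hs
      rcases Finset.mem_image.mp hs with ⟨p, _, rfl⟩
      calc Metric.diam (closedBall p (r/2)) ≤ 2 * (r/2) := diam_closedBall (by linarith)
        _ = r := by ring
    calc coverNum F r ≤ (C.card : ℝ≥0∞) := by
          refine iInf_le_of_le C ?_
          refine iInf_le_of_le h1 ?_
          exact iInf_le _ h2
      _ ≤ (N : ℝ≥0∞) := by
          exact_mod_cast Nat.cast_le.mpr Finset.card_image_le
  -- the discrete measure
  have hpick : ∀ p ∈ t, ∃ x, x ∈ E ∧ codingMap T a x = p := by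
    intro p hp
    rcases htF hp with ⟨x, hx1, hx2⟩
    exact ⟨x, hx1, hx2⟩
  have hpick' : ∀ p, ∃ x, (p ∈ t → (x ∈ E ∧ codingMap T a x = p)) := by
    intro p
    by_cases hp : p ∈ t
    · rcases hpick p hp with ⟨x, hx⟩
      exact ⟨x, fun _ => hx⟩
    · exact ⟨x₀, fun h => absurd h hp⟩
  choose pick hpickspec using hpick'
  have hpickE : ∀ p ∈ t, pick p ∈ E := fun p hp => (hpickspec p hp).1
  have hpickC : ∀ p ∈ t, codingMap T a (pick p) = p := fun p hp => (hpickspec p hp).2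
  set μ : Measure (ℕ → Fin m) :=
    (N : ℝ≥0∞)⁻¹ • ∑ p ∈ t, Measure.dirac (pick p) with hμ
  have hNne : (N : ℝ≥0∞) ≠ 0 := by
    simp only [ne_eq, Nat.cast_eq_zero]
    omega
  have hNnetop : (N : ℝ≥0∞) ≠ ⊤ := ENNReal.natCast_ne_top N
  have hμprob : IsProbabilityMeasure μ := by
    constructor
    rw [hμ, Measure.smul_apply, smul_eq_mul]
    have h1 : (∑ p ∈ t, Measure.dirac (pick p)) Set.univ = N := by
      rw [Measure.coe_finset_sum, Finset.sum_apply]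
      have : ∀ p ∈ t, Measure.dirac (pick p) Set.univ = 1 :=
        fun p _ => by simp
      rw [Finset.sum_congr rfl this]
      simp [hN]
    rw [h1, ENNReal.inv_mul_cancel hNne hNnetop]
  have hμnull : μ Eᶜ = 0 := by
    rw [hμ, Measure.smul_apply, Measure.coe_finset_sum, Finset.sum_apply]
    have h1 : ∀ p ∈ t, Measure.dirac (pick p) Eᶜ = 0 := by
      intro p hp
      apply measure_mono_null (Set.compl_subset_compl.mpr
        (Set.singleton_subset_iff.mpr (hpickE p hp)))
      rw [Measure.dirac_apply' _ (measurableSet_singleton _).compl]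
      simp
    rw [Finset.sum_congr rfl h1]
    simp
  -- computing integrals against μ
  have hint : ∀ f : (ℕ → Fin m) → ℝ,
      ∫ y, f y ∂μ = (N : ℝ)⁻¹ * ∑ p ∈ t, f (pick p) := by
    intro f
    rw [hμ, integral_smul_measure, integral_finset_sum_measure
      (fun p _ => (integrable_const (f (pick p))).congr (ae_eq_dirac f).symm)]
    have h1 : ∀ p ∈ t, ∫ y, f y ∂(Measure.dirac (pick p)) = f (pick p) :=
      fun p _ => integral_dirac f (pick p)
    rw [Finset.sum_congr rfl h1]
    rw [ENNReal.toReal_inv, ENNReal.toReal_natCast, smul_eq_mul]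
  -- row sums
  have hrow : ∀ q ∈ t, ∑ p ∈ t, Zwedge T (pick q) (pick p) r ≤ ((n₀ : ℝ) + 1) * C1 := by
    intro q hq
    set xq := pick q with hxq
    set φ : EuclideanSpace ℝ (Fin d) → ℕ :=
      fun p => min (if xq = pick p then n₀ else firstDiff xq (pick p)) n₀ with hφ
    have hφmem : ∀ p ∈ t, φ p ∈ Finset.range (n₀ + 1) :=
      fun p _ => Finset.mem_range.mpr (Nat.lt_succ_of_le (min_le_right _ _))
    rw [← Finset.sum_fiberwise_of_maps_to hφmem (fun p => Zwedge T xq (pick p) r)]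
    have hZword_top : Zword T xq n₀ r = 1 :=
      Zmat_eq_one hd (isUnit_wordProd T hTinv xq n₀) (hsval_small xq)
    have hbucket : ∀ n ∈ Finset.range (n₀ + 1),
        ∑ p ∈ t.filter (fun p => φ p = n), Zwedge T xq (pick p) r ≤ C1 := by
      intro n hn
      have hn' : n ≤ n₀ := Nat.lt_succ_iff.mp (Finset.mem_range.mp hn)
      set t' := t.filter (fun p => φ p = n) with ht'
      have hterm : ∀ p ∈ t', Zwedge T xq (pick p) r ≤ Zword T xq n r := by
        intro p hp
        rw [ht', Finset.mem_filter] at hp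
        obtain ⟨hpt, hpφ⟩ := hp
        by_cases hcase : xq = pick p
        · have hnn₀ : n = n₀ := by
            rw [hφ] at hpφ
            simp only [if_pos hcase, min_self] at hpφ
            omega
          rw [← hcase, Zwedge_self, hnn₀, hZword_top]
        · rw [hφ] at hpφ
          simp only [if_neg hcase] at hpφ
          rcases lt_or_eq_of_le hn' with hlt | heq
          · have hfd : firstDiff xq (pick p) = n := by omega
            rw [Zwedge_ne T hcase, hfd]
          · rw [← heq] at hZword_top
            rw [hZword_top]
            exact Zwedge_le_one T hd hTinv hr0 xq (pick p)
      have hcyl : ∀ p ∈ t', ∃ y ∈ cylinder xq n, codingMap T a y = p := by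
        intro p hp
        rw [ht', Finset.mem_filter] at hp
        obtain ⟨hpt, hpφ⟩ := hp
        refine ⟨pick p, ?_, hpickC p hpt⟩
        intro k hk
        by_cases hcase : xq = pick p
        · rw [← hcase]
        · rw [hφ] at hpφ
          simp only [if_neg hcase] at hpφ
          have hfd : n ≤ firstDiff xq (pick p) := by omega
          exact (firstDiff_lt (x := xq) (y := pick p) (by omega)).symm
      have hsep' : ∀ p ∈ t', ∀ q' ∈ t', p ≠ q' → r / 2 ≤ dist p q' := by
        intro p hp q' hq' hne
        rw [ht', Finset.mem_filter] at hp hq'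
        exact htsep p hp.1 q' hq'.1 hne
      calc ∑ p ∈ t', Zwedge T xq (pick p) r ≤ ∑ _p ∈ t', Zword T xq n r :=
          Finset.sum_le_sum hterm
        _ = (t'.card : ℝ) * Zword T xq n r := by
            rw [Finset.sum_const, nsmul_eq_mul]
        _ ≤ C1 := hcount xq n t' hsep' hcyl
    calc ∑ n ∈ Finset.range (n₀ + 1), ∑ p ∈ t.filter (fun p => φ p = n), Zwedge T xq (pick p) r
        ≤ ∑ _n ∈ Finset.range (n₀ + 1), C1 := Finset.sum_le_sum hbucket
      _ = ((n₀ : ℝ) + 1) * C1 := by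
          rw [Finset.sum_const, Finset.card_range, nsmul_eq_mul]
          push_cast
          ring
  -- energy bound
  have henergy : energy T μ r ≤ (N : ℝ)⁻¹ * (((n₀ : ℝ) + 1) * C1) := by
    have hNpos : (0:ℝ) < N := by exact_mod_cast htpos
    have h1 : energy T μ r
        = (N : ℝ)⁻¹ * ∑ q ∈ t, ((N : ℝ)⁻¹ * ∑ p ∈ t, Zwedge T (pick q) (pick p) r) := by
      rw [energy, hint]
      congr 1
      apply Finset.sum_congr rfl
      intro q _
      rw [hint]
    rw [h1]
    have h2 : ∑ q ∈ t, ((N : ℝ)⁻¹ * ∑ p ∈ t, Zwedge T (pick q) (pick p) r)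
        ≤ ∑ _q ∈ t, ((N : ℝ)⁻¹ * (((n₀ : ℝ) + 1) * C1)) := by
      apply Finset.sum_le_sum
      intro q hq
      exact mul_le_mul_of_nonneg_left (hrow q hq) (inv_nonneg.mpr (Nat.cast_nonneg _))
    calc (N : ℝ)⁻¹ * ∑ q ∈ t, ((N : ℝ)⁻¹ * ∑ p ∈ t, Zwedge T (pick q) (pick p) r)
        ≤ (N : ℝ)⁻¹ * ∑ _q ∈ t, ((N : ℝ)⁻¹ * (((n₀ : ℝ) + 1) * C1)) :=
          mul_le_mul_of_nonneg_left h2 (inv_nonneg.mpr (Nat.cast_nonneg _))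
      _ = (N : ℝ)⁻¹ * (((n₀ : ℝ) + 1) * C1) := by
          rw [Finset.sum_const, nsmul_eq_mul, ← hN, ← mul_assoc,
            inv_mul_cancel₀ hNpos.ne', one_mul]
  -- the capacity
  set S : Set ℝ := { v : ℝ | ∃ ν : Measure (ℕ → Fin m),
      IsProbabilityMeasure ν ∧ ν Eᶜ = 0 ∧ v = energy T ν r } with hS
  have hSmem : energy T μ r ∈ S := ⟨μ, hμprob, hμnull, rfl⟩
  have hSlb : ∀ v ∈ S, r ^ d ≤ v := by
    rintro v ⟨ν, hν, _, rfl⟩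
    exact energy_lower T hd hTinv hT_le hαp0.le hαp1.le hr0 hr1 ν
  have hrd : (0:ℝ) < r ^ d := pow_pos hr0 d
  have hp₀ge : r ^ d ≤ sInf S := le_csInf ⟨_, hSmem⟩ hSlb
  have hp₀le : sInf S ≤ energy T μ r := csInf_le ⟨r ^ d, hSlb⟩ hSmem
  have hp₀pos : 0 < sInf S := lt_of_lt_of_le hrd hp₀ge
  have hcap : capFn T E r = (sInf S)⁻¹ := rfl
  -- final arithmetic
  have hNpos : (0:ℝ) < N := by exact_mod_cast htpos
  have hfinal : (N : ℝ) ≤ (L + 2) * C1 * capFn T E r := by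
    have h1 : (N : ℝ) * sInf S ≤ ((n₀ : ℝ) + 1) * C1 := by
      calc (N : ℝ) * sInf S ≤ (N : ℝ) * energy T μ r :=
          mul_le_mul_of_nonneg_left hp₀le hNpos.le
        _ ≤ (N : ℝ) * ((N : ℝ)⁻¹ * (((n₀ : ℝ) + 1) * C1)) :=
          mul_le_mul_of_nonneg_left henergy hNpos.le
        _ = ((n₀ : ℝ) + 1) * C1 := by field_simp
    rw [hcap]
    have hinv : (0:ℝ) ≤ (sInf S)⁻¹ := inv_nonneg.mpr hp₀pos.le
    calc (N : ℝ) = ((N : ℝ) * sInf S) * (sInf S)⁻¹ := by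
          field_simp
      _ ≤ (((n₀ : ℝ) + 1) * C1) * (sInf S)⁻¹ := mul_le_mul_of_nonneg_right h1 hinv
      _ ≤ ((L + 2) * C1) * (sInf S)⁻¹ := by
          apply mul_le_mul_of_nonneg_right _ hinv
          exact mul_le_mul_of_nonneg_right hn₀L hC1pos.le
      _ = (L + 2) * C1 * (sInf S)⁻¹ := by ring
  calc coverNum F r ≤ (N : ℝ≥0∞) := hcover
    _ = ENNReal.ofReal (N : ℝ) := by
        rw [ENNReal.ofReal_natCast]
    _ ≤ ENNReal.ofReal ((Real.log r / Real.log αp + 2) * C1 * capFn T E r) := by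
        apply ENNReal.ofReal_le_ofReal
        rw [← hL]
        exact hfinal


end SelfAffineProj
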